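/- Let γ = (D, x, π₁, π₂, (ω_j)_{j∈J}, (η_j)_{j∈J}) be a modular bridge from an (F,H)-metrized quantum vector bundle A₁ = (M₁,⟨·,·⟩₁,D₁,A₁,L₁) to an (F,H)-metrized quantum vector bundle A₂ = (M₂,⟨·,·⟩₂,D₂,A₂,L₂), of length λ. Let I(J) be the set of families (t_j)_{j∈J} ∈ [−1,1]^J with only finitely many nonzero entries and Σ_{j∈J} |t_j| ≤ 1, and for α = (t_j)_{j∈J} ∈ I(J) set ω_α = Σ_{j∈J} t_j ω_j ∈ M₁ and η_α = Σ_{j∈J} t_j η_j ∈ M₂. Then coh(γ) = (D, x, π₁, π₂, (ω_α)_{α∈I(J)}, (η_α)_{α∈I(J)}) is a modular bridge from A₁ to A₂ whose length is at most λ, with the same basic bridge as γ and with deck seminorm equal to that of γ; moreover {ω_α : α ∈ I(J)} and {η_α : α ∈ I(J)} are convex, balanced subsets of M₁ and M₂ respectively. -/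

import Mathlib

noncomputable section

open scoped ENNReal NNReal
open Set Filter Topology

/-! ## Real and imaginary parts in a complex star module -/

def rePart {A : Type*} [AddCommGroup A] [Module ℂ A] [Star A] (a : A) : A :=
  ((2 : ℂ)⁻¹) • (a + star a)

def imPart {A : Type*} [AddCommGroup A] [Module ℂ A] [Star A] (a : A) : A :=
  ((2 * Complex.I)⁻¹) • (a - star a)

/-! ## Permissible functions -/

def Permissible (F : ℝ≥0 → ℝ≥0 → ℝ≥0 → ℝ≥0 → ℝ≥0) : Prop :=
  (∀ ⦃x₁ x₂ y₁ y₂ l₁ l₂ m₁ m₂ : ℝ≥0⦄, x₁ ≤ x₂ → y₁ ≤ y₂ → l₁ ≤ l₂ → m₁ ≤ m₂ →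
      F x₁ y₁ l₁ m₁ ≤ F x₂ y₂ l₂ m₂) ∧
  ∀ x y l m : ℝ≥0, x * m + y * l ≤ F x y l m

def PermissiblePair (F : ℝ≥0 → ℝ≥0 → ℝ≥0 → ℝ≥0 → ℝ≥0) (H : ℝ≥0 → ℝ≥0 → ℝ≥0) : Prop :=
  Permissible F ∧
  (∀ ⦃x₁ x₂ y₁ y₂ : ℝ≥0⦄, x₁ ≤ x₂ → y₁ ≤ y₂ → H x₁ y₁ ≤ H x₂ y₂) ∧
  ∀ x y : ℝ≥0, 2 * x * y ≤ H x y

def PermissibleTriple (F : ℝ≥0 → ℝ≥0 → ℝ≥0 → ℝ≥0 → ℝ≥0)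
    (G : ℝ≥0 → ℝ≥0 → ℝ≥0 → ℝ≥0) (H : ℝ≥0 → ℝ≥0 → ℝ≥0) : Prop :=
  PermissiblePair F H ∧
  (∀ ⦃x₁ x₂ y₁ y₂ z₁ z₂ : ℝ≥0⦄, x₁ ≤ x₂ → y₁ ≤ y₂ → z₁ ≤ z₂ → G x₁ y₁ z₁ ≤ G x₂ y₂ z₂) ∧
  ∀ x y z : ℝ≥0, (x + y) * z ≤ G x y z

/-! ## Hausdorff distance for an `ℝ≥0∞`-valued distance function -/

def ennHausdorff {X : Type*} (d : X → X → ℝ≥0∞) (s t : Set X) : ℝ≥0∞ :=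
  max (⨆ x ∈ s, ⨅ y ∈ t, d x y) (⨆ y ∈ t, ⨅ x ∈ s, d x y)

/-! ## States of a unital C*-algebra and the Monge-Kantorovich metric -/

structure State (A : Type) [NormedRing A] [StarRing A] [NormedAlgebra ℂ A] : Type where
  toFun : A →L[ℂ] ℂ
  map_one : toFun 1 = 1
  pos_re : ∀ a : A, 0 ≤ (toFun (star a * a)).re
  pos_im : ∀ a : A, (toFun (star a * a)).im = 0

instance {A : Type} [NormedRing A] [StarRing A] [NormedAlgebra ℂ A] :
    TopologicalSpace (State A) :=
  TopologicalSpace.induced (fun φ (a : A) => φ.toFun a) inferInstance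

def mkDist {A : Type} [NormedRing A] [StarRing A] [NormedAlgebra ℂ A]
    (L : A → ℝ≥0∞) (φ ψ : State A) : ℝ≥0∞ :=
  ⨆ a ∈ {a : A | L a ≤ 1}, (‖φ.toFun a - ψ.toFun a‖₊ : ℝ≥0∞)

/-- The Monge-Kantorovich (pseudo)metric associated with `L` is a metric which
metrizes the weak* topology on the state space. -/
def Metrizes {A : Type} [NormedRing A] [StarRing A] [NormedAlgebra ℂ A] (L : A → ℝ≥0∞) : Prop :=
  (∀ φ ψ : State A, mkDist L φ ψ ≠ ⊤) ∧
  ∀ (φ : State A) (s : Set (State A)),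
    s ∈ nhds φ ↔ ∃ ε : ℝ≥0∞, 0 < ε ∧ {ψ : State A | mkDist L φ ψ < ε} ⊆ s

/-! ## Quasi-Leibniz quantum compact metric spaces -/

def QuasiLeibnizL (F : ℝ≥0 → ℝ≥0 → ℝ≥0 → ℝ≥0 → ℝ≥0) {A : Type}
    [NormedRing A] [StarRing A] [NormedAlgebra ℂ A] (L : A → ℝ≥0∞) : Prop :=
  ∀ a b : A, L a ≠ ⊤ → L b ≠ ⊤ →
    L (rePart (a * b)) ≤ (F ‖a‖₊ ‖b‖₊ (L a).toNNReal (L b).toNNReal : ℝ≥0∞) ∧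
    L (imPart (a * b)) ≤ (F ‖a‖₊ ‖b‖₊ (L a).toNNReal (L b).toNNReal : ℝ≥0∞)

def QCMSAxioms (F : ℝ≥0 → ℝ≥0 → ℝ≥0 → ℝ≥0 → ℝ≥0) (A : Type)
    [NormedRing A] [StarRing A] [NormedAlgebra ℂ A] (L : A → ℝ≥0∞) : Prop :=
  (∀ a : A, L a ≠ ⊤ → IsSelfAdjoint a) ∧
  (∀ a b : A, L (a + b) ≤ L a + L b) ∧
  (∀ (r : ℝ) (a : A), L (r • a) = (‖r‖₊ : ℝ≥0∞) * L a) ∧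
  (∀ a : A, IsSelfAdjoint a → a ∈ closure {b : A | L b ≠ ⊤}) ∧
  (∀ a : A, L a = 0 ↔ ∃ r : ℝ, a = r • (1 : A)) ∧
  LowerSemicontinuous L ∧
  Metrizes L ∧
  QuasiLeibnizL F L

/-- A bundled `F`-quasi-Leibniz quantum compact metric space. -/
structure QCMS (F : ℝ≥0 → ℝ≥0 → ℝ≥0 → ℝ≥0 → ℝ≥0) : Type 1 where
  carrier : Type
  [nr : NormedRing carrier]
  [sr : StarRing carrier]
  [cstar : CStarRing carrier]
  [na : NormedAlgebra ℂ carrier]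
  [sm : StarModule ℂ carrier]
  [cp : CompleteSpace carrier]
  L : carrier → ℝ≥0∞
  ax : QCMSAxioms F carrier L

attribute [instance] QCMS.nr QCMS.sr QCMS.cstar QCMS.na QCMS.sm QCMS.cp

variable {F : ℝ≥0 → ℝ≥0 → ℝ≥0 → ℝ≥0 → ℝ≥0} {H : ℝ≥0 → ℝ≥0 → ℝ≥0}
variable {G : ℝ≥0 → ℝ≥0 → ℝ≥0 → ℝ≥0}

/-- Diameter of the state space for the Monge-Kantorovich metric. -/
def QCMS.diam (A : QCMS F) : ℝ≥0∞ :=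
  ⨆ φ : State A.carrier, ⨆ ψ : State A.carrier, mkDist A.L φ ψ

/-! ## Quantum isometries and tunnels -/

def QuantumIsometryProps (D A : QCMS F) (π : D.carrier →⋆ₐ[ℂ] A.carrier) : Prop :=
  Function.Surjective π ∧
  ∀ a : A.carrier, A.L a ≠ ⊤ → A.L a = ⨅ d ∈ {d : D.carrier | π d = a}, D.L d

structure QuantumIsometry (D A : QCMS F) : Type where
  toHom : D.carrier →⋆ₐ[ℂ] A.carrier
  prop : QuantumIsometryProps D A toHom

structure FullQuantumIsometry (A B : QCMS F) : Type where
  toEquiv : A.carrier ≃⋆ₐ[ℂ] B.carrier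
  isometric : ∀ a : A.carrier, B.L (toEquiv a) = A.L a

def pullbackStates {D A : QCMS F} (π : D.carrier →⋆ₐ[ℂ] A.carrier) :
    Set (State D.carrier) :=
  {χ : State D.carrier | ∃ φ : State A.carrier, ∀ d : D.carrier, χ.toFun d = φ.toFun (π d)}

structure Tunnel (A B : QCMS F) : Type 1 where
  mid : QCMS F
  πA : QuantumIsometry mid A
  πB : QuantumIsometry mid B

def Tunnel.extent {A B : QCMS F} (τ : Tunnel A B) : ℝ≥0∞ :=
  max (ennHausdorff (mkDist τ.mid.L) univ (pullbackStates τ.πA.toHom))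
      (ennHausdorff (mkDist τ.mid.L) univ (pullbackStates τ.πB.toHom))

def Tunnel.targetSet {A B : QCMS F} (τ : Tunnel A B) (a : A.carrier) (l : ℝ≥0∞) :
    Set B.carrier :=
  {b | ∃ d : τ.mid.carrier, τ.πA.toHom d = a ∧ τ.mid.L d ≤ l ∧ τ.πB.toHom d = b}

/-- The dual Gromov-Hausdorff propinquity. -/
def dualPropinquity (A B : QCMS F) : ℝ≥0∞ := ⨅ τ : Tunnel A B, τ.extent
/-! ## Hilbert modules and metrized quantum vector bundles -/

def HilbertModAxioms (A : Type) [NormedRing A] [StarRing A] [NormedAlgebra ℂ A]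
    (M : Type) [NormedAddCommGroup M] [Module ℂ M] [Module A M] [IsScalarTower ℂ A M]
    (ip : M → M → A) : Prop :=
  (∀ ω η ζ : M, ip (ω + η) ζ = ip ω ζ + ip η ζ) ∧
  (∀ (a : A) (ω η : M), ip (a • ω) η = a * ip ω η) ∧
  (∀ ω η : M, ip ω η = star (ip η ω)) ∧
  (∀ ω : M, ∃ b : A, ip ω ω = star b * b) ∧
  (∀ ω : M, ip ω ω = 0 → ω = 0) ∧
  (∀ ω : M, ‖ω‖ = Real.sqrt ‖ip ω ω‖)

def DNormAxioms (H : ℝ≥0 → ℝ≥0 → ℝ≥0) {A : Type}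
    [NormedRing A] [StarRing A] [NormedAlgebra ℂ A] (L : A → ℝ≥0∞)
    {M : Type} [NormedAddCommGroup M] [Module ℂ M]
    (ip : M → M → A) (Dn : M → ℝ≥0∞) : Prop :=
  (∀ ω η : M, Dn (ω + η) ≤ Dn ω + Dn η) ∧
  (∀ (c : ℂ) (ω : M), Dn (c • ω) = (‖c‖₊ : ℝ≥0∞) * Dn ω) ∧
  Dense {ω : M | Dn ω ≠ ⊤} ∧
  (∀ ω : M, (‖ω‖₊ : ℝ≥0∞) ≤ Dn ω) ∧
  IsCompact {ω : M | Dn ω ≤ 1} ∧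
  ∀ ω η : M, Dn ω ≠ ⊤ → Dn η ≠ ⊤ →
    L (rePart (ip ω η)) ≤ (H (Dn ω).toNNReal (Dn η).toNNReal : ℝ≥0∞) ∧
    L (imPart (ip ω η)) ≤ (H (Dn ω).toNNReal (Dn η).toNNReal : ℝ≥0∞)

/-- A bundled `(F,H)`-metrized quantum vector bundle. -/
structure MQVB (F : ℝ≥0 → ℝ≥0 → ℝ≥0 → ℝ≥0 → ℝ≥0) (H : ℝ≥0 → ℝ≥0 → ℝ≥0) : Type 1 where
  base : QCMS F
  carrier : Type
  [ag : NormedAddCommGroup carrier]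
  [mc : Module ℂ carrier]
  [ma : Module base.carrier carrier]
  [st : IsScalarTower ℂ base.carrier carrier]
  [cp : CompleteSpace carrier]
  ip : carrier → carrier → base.carrier
  Dn : carrier → ℝ≥0∞
  hilbert : HilbertModAxioms base.carrier carrier ip
  dnorm : DNormAxioms H base.L ip Dn

attribute [instance] MQVB.ag MQVB.mc MQVB.ma MQVB.st MQVB.cp

/-- The modular Monge-Kantorovich metric. -/
def MQVB.mkD {F H} (Am : MQVB F H) (ω η : Am.carrier) : ℝ≥0∞ :=
  ⨆ ζ ∈ {ζ : Am.carrier | Am.Dn ζ ≤ 1}, (‖Am.ip (ω - η) ζ‖₊ : ℝ≥0∞)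

/-! ## Modular quantum isometries, modular tunnels, dual modular propinquity -/

def ModularQIProps {F H} (Dm Am : MQVB F H)
    (θ : Dm.base.carrier →⋆ₐ[ℂ] Am.base.carrier) (Θ : Dm.carrier →ₗ[ℂ] Am.carrier) : Prop :=
  QuantumIsometryProps Dm.base Am.base θ ∧
  (∀ (a : Dm.base.carrier) (ω : Dm.carrier), Θ (a • ω) = θ a • Θ ω) ∧
  (∀ ω η : Dm.carrier, θ (Dm.ip ω η) = Am.ip (Θ ω) (Θ η)) ∧
  Function.Surjective Θ ∧
  ∀ ω : Am.carrier, Am.Dn ω ≠ ⊤ → Am.Dn ω = ⨅ η ∈ {η : Dm.carrier | Θ η = ω}, Dm.Dn η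

structure ModularQI {F H} (Dm Am : MQVB F H) : Type where
  θ : Dm.base.carrier →⋆ₐ[ℂ] Am.base.carrier
  Θ : Dm.carrier →ₗ[ℂ] Am.carrier
  prop : ModularQIProps Dm Am θ Θ

/-- A full modular quantum isometry. -/
structure FullModularQI {F H} (Am Bm : MQVB F H) : Type where
  θ : FullQuantumIsometry Am.base Bm.base
  Θ : Am.carrier ≃ₗ[ℂ] Bm.carrier
  map_smul : ∀ (a : Am.base.carrier) (ω : Am.carrier), Θ (a • ω) = θ.toEquiv a • Θ ω
  map_ip : ∀ ω η : Am.carrier, θ.toEquiv (Am.ip ω η) = Bm.ip (Θ ω) (Θ η)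
  dn_eq : ∀ ω : Am.carrier, Bm.Dn (Θ ω) = Am.Dn ω

structure ModularTunnel {F H} (Am Bm : MQVB F H) : Type 1 where
  mid : MQVB F H
  QA : ModularQI mid Am
  QB : ModularQI mid Bm

def ModularTunnel.baseTunnel {F H} {Am Bm : MQVB F H} (τ : ModularTunnel Am Bm) :
    Tunnel Am.base Bm.base :=
  ⟨τ.mid.base, ⟨τ.QA.θ, τ.QA.prop.1⟩, ⟨τ.QB.θ, τ.QB.prop.1⟩⟩

def ModularTunnel.extent {F H} {Am Bm : MQVB F H} (τ : ModularTunnel Am Bm) : ℝ≥0∞ :=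
  τ.baseTunnel.extent

def ModularTunnel.targetSet {F H} {Am Bm : MQVB F H} (τ : ModularTunnel Am Bm)
    (ω : Am.carrier) (l : ℝ≥0∞) : Set Bm.carrier :=
  {η | ∃ ζ : τ.mid.carrier, τ.QA.Θ ζ = ω ∧ τ.mid.Dn ζ ≤ l ∧ τ.QB.Θ ζ = η}

/-- The dual modular Gromov-Hausdorff propinquity. -/
def dualModularPropinquity {F H} (Am Bm : MQVB F H) : ℝ≥0∞ :=
  ⨅ τ : ModularTunnel Am Bm, τ.extent
/-! ## Bridges and modular bridges -/

structure Bridge {F} (A B : QCMS F) : Type 1 where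
  amb : Type
  [nr : NormedRing amb]
  [sr : StarRing amb]
  [cstar : CStarRing amb]
  [na : NormedAlgebra ℂ amb]
  [sm : StarModule ℂ amb]
  [cp : CompleteSpace amb]
  x : amb
  πA : A.carrier →⋆ₐ[ℂ] amb
  πB : B.carrier →⋆ₐ[ℂ] amb
  injA : Function.Injective πA
  injB : Function.Injective πB
  pivot : ∃ φ : State amb, ∀ d : amb,
    φ.toFun (d * x) = φ.toFun d ∧ φ.toFun (x * d) = φ.toFun d

attribute [instance] Bridge.nr Bridge.sr Bridge.cstar Bridge.na Bridge.sm Bridge.cp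

/-- The bridge seminorm. -/
def Bridge.bn {F} {A B : QCMS F} (γ : Bridge A B) (a : A.carrier) (b : B.carrier) : ℝ≥0∞ :=
  (‖γ.πA a * γ.x - γ.x * γ.πB b‖₊ : ℝ≥0∞)

/-- The set `S₁(D|x)` of states for which `x` acts as a unit. -/
def Bridge.S1 {F} {A B : QCMS F} (γ : Bridge A B) : Set (State γ.amb) :=
  {φ : State γ.amb | ∀ d : γ.amb,
    φ.toFun (d * γ.x) = φ.toFun d ∧ φ.toFun (γ.x * d) = φ.toFun d}

def Bridge.height {F} {A B : QCMS F} (γ : Bridge A B) : ℝ≥0∞ :=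
  max (ennHausdorff (mkDist A.L) univ
        {ψ : State A.carrier | ∃ φ ∈ γ.S1, ∀ a : A.carrier, ψ.toFun a = φ.toFun (γ.πA a)})
      (ennHausdorff (mkDist B.L) univ
        {ψ : State B.carrier | ∃ φ ∈ γ.S1, ∀ b : B.carrier, ψ.toFun b = φ.toFun (γ.πB b)})

def Bridge.reach {F} {A B : QCMS F} (γ : Bridge A B) : ℝ≥0∞ :=
  max (⨆ a ∈ {a : A.carrier | A.L a ≤ 1}, ⨅ b ∈ {b : B.carrier | B.L b ≤ 1}, γ.bn a b)
      (⨆ b ∈ {b : B.carrier | B.L b ≤ 1}, ⨅ a ∈ {a : A.carrier | A.L a ≤ 1}, γ.bn a b)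

def Bridge.length {F} {A B : QCMS F} (γ : Bridge A B) : ℝ≥0∞ :=
  max γ.height γ.reach

/-- A modular bridge between two metrized quantum vector bundles. -/
structure ModularBridge {F H} (Am Bm : MQVB F H) : Type 1 where
  J : Type
  toBridge : Bridge Am.base Bm.base
  x_norm : ‖toBridge.x‖ = 1
  anchor : J → Am.carrier
  coanchor : J → Bm.carrier
  anchor_le : ∀ j : J, Am.Dn (anchor j) ≤ 1
  coanchor_le : ∀ j : J, Bm.Dn (coanchor j) ≤ 1

/-- The deck seminorm of a modular bridge. -/
def ModularBridge.deck {F H} {Am Bm : MQVB F H} (γ : ModularBridge Am Bm)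
    (ω : Am.carrier) (η : Bm.carrier) : ℝ≥0∞ :=
  ⨆ j : γ.J,
    max (γ.toBridge.bn (Am.ip ω (γ.anchor j)) (Bm.ip η (γ.coanchor j)))
        (γ.toBridge.bn (Am.ip (γ.anchor j) ω) (Bm.ip (γ.coanchor j) η))

def ModularBridge.imprint {F H} {Am Bm : MQVB F H} (γ : ModularBridge Am Bm) : ℝ≥0∞ :=
  max (ennHausdorff Am.mkD (range γ.anchor) {ω : Am.carrier | Am.Dn ω ≤ 1})
      (ennHausdorff Bm.mkD (range γ.coanchor) {η : Bm.carrier | Bm.Dn η ≤ 1})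

def ModularBridge.modularReach {F H} {Am Bm : MQVB F H} (γ : ModularBridge Am Bm) : ℝ≥0∞ :=
  ⨆ j : γ.J, γ.deck (γ.anchor j) (γ.coanchor j)

def ModularBridge.length {F H} {Am Bm : MQVB F H} (γ : ModularBridge Am Bm) : ℝ≥0∞ :=
  max γ.toBridge.length (γ.imprint + γ.modularReach)

/-! ## Metrical quantum vector bundles -/

/-- An `(F,G,H)`-metrical quantum vector bundle. -/
structure MetQVB (F : ℝ≥0 → ℝ≥0 → ℝ≥0 → ℝ≥0 → ℝ≥0) (G : ℝ≥0 → ℝ≥0 → ℝ≥0 → ℝ≥0)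
    (H : ℝ≥0 → ℝ≥0 → ℝ≥0) : Type 1 where
  toMQVB : MQVB F H
  alt : QCMS F
  act : alt.carrier →ₐ[ℂ] Module.End ℂ toMQVB.carrier
  act_star : ∀ (b : alt.carrier) (ω η : toMQVB.carrier),
    toMQVB.ip (act (star b) ω) η = toMQVB.ip ω (act b η)
  act_G : ∀ (b : alt.carrier) (ω : toMQVB.carrier), alt.L b ≠ ⊤ → toMQVB.Dn ω ≠ ⊤ →
    toMQVB.Dn (act b ω) ≤ (G ‖b‖₊ (alt.L b).toNNReal ‖ω‖₊ : ℝ≥0∞)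

/-- A metrical tunnel between metrical quantum vector bundles. -/
structure MetTunnel {F G H} (Am Bm : MetQVB F G H) : Type 1 where
  modTun : ModularTunnel Am.toMQVB Bm.toMQVB
  altTun : Tunnel Am.alt Bm.alt
  act : altTun.mid.carrier →ₐ[ℂ] Module.End ℂ modTun.mid.carrier
  act_G : ∀ (d : altTun.mid.carrier) (ξ : modTun.mid.carrier),
    IsSelfAdjoint d → altTun.mid.L d ≠ ⊤ → modTun.mid.Dn ξ ≠ ⊤ →
    modTun.mid.Dn (act d ξ) ≤
      (G ‖d‖₊ (altTun.mid.L d).toNNReal (modTun.mid.Dn ξ).toNNReal : ℝ≥0∞)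
  compatA : ∀ (d : altTun.mid.carrier) (ξ : modTun.mid.carrier),
    modTun.QA.Θ (act d ξ) = Am.act (altTun.πA.toHom d) (modTun.QA.Θ ξ)
  compatB : ∀ (d : altTun.mid.carrier) (ξ : modTun.mid.carrier),
    modTun.QB.Θ (act d ξ) = Bm.act (altTun.πB.toHom d) (modTun.QB.Θ ξ)

def MetTunnel.extent {F G H} {Am Bm : MetQVB F G H} (τ : MetTunnel Am Bm) : ℝ≥0∞ :=
  max τ.modTun.extent τ.altTun.extent

/-- The dual metrical Gromov-Hausdorff propinquity. -/
def dualMetricalPropinquity {F G H} (Am Bm : MetQVB F G H) : ℝ≥0∞ :=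
  ⨅ τ : MetTunnel Am Bm, τ.extent

/-- A full metrical quantum isometry. -/
structure FullMetricalQI {F G H} (Am Bm : MetQVB F G H) : Type where
  toFullModular : FullModularQI Am.toMQVB Bm.toMQVB
  π : FullQuantumIsometry Am.alt Bm.alt
  compat : ∀ (b : Am.alt.carrier) (ω : Am.toMQVB.carrier),
    toFullModular.Θ (Am.act b ω) = Bm.act (π.toEquiv b) (toFullModular.Θ ω)

/-! ## STATEMENT 0 -/

/-- The index set `I(J)`: finitely supported families in `[-1,1]` with `∑ |t j| ≤ 1`. -/
def IndexIJ (J : Type) : Type :=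
  {t : J →₀ ℝ // (∀ j : J, |t j| ≤ 1) ∧ ∑ j ∈ t.support, |t j| ≤ 1}

/-- The anchors `ω_α = ∑_j t_j ω_j` of the coherent bridge. -/
def cohAnchor {F : ℝ≥0 → ℝ≥0 → ℝ≥0 → ℝ≥0 → ℝ≥0} {H : ℝ≥0 → ℝ≥0 → ℝ≥0}
    {Am Bm : MQVB F H} (γ : ModularBridge Am Bm) (α : IndexIJ γ.J) : Am.carrier :=
  ∑ j ∈ α.1.support, α.1 j • γ.anchor j

/-- The co-anchors `η_α = ∑_j t_j η_j` of the coherent bridge. -/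
def cohCoanchor {F : ℝ≥0 → ℝ≥0 → ℝ≥0 → ℝ≥0 → ℝ≥0} {H : ℝ≥0 → ℝ≥0 → ℝ≥0}
    {Am Bm : MQVB F H} (γ : ModularBridge Am Bm) (α : IndexIJ γ.J) : Bm.carrier :=
  ∑ j ∈ α.1.support, α.1 j • γ.coanchor j

/-! ### Auxiliary lemmas for stmt0 -/

namespace Stmt0Aux

variable {J : Type}

lemma sum_nnnorm_le (α : IndexIJ J) :
    (∑ j ∈ α.1.support, ‖α.1 j‖₊ : ℝ≥0) ≤ 1 := by
  rw [← NNReal.coe_le_coe, NNReal.coe_sum, NNReal.coe_one]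
  simpa [Real.norm_eq_abs] using α.2.2

/-- The Dirac family at `j`. -/
def delta (j : J) : IndexIJ J :=
  ⟨Finsupp.single j 1, by
    intro k
    classical
    rw [Finsupp.single_apply]
    split_ifs <;> simp, by
    rw [Finsupp.support_single_ne_zero j one_ne_zero, Finset.sum_singleton,
      Finsupp.single_eq_same, abs_one]⟩

lemma sum_eq_of_subset {M : Type*} [AddCommGroup M] [Module ℝ M]
    (t : J →₀ ℝ) {s : Finset J} (hs : t.support ⊆ s) (v : J → M) :
    ∑ j ∈ t.support, t j • v j = ∑ j ∈ s, t j • v j :=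
  Finset.sum_subset hs fun j _ hj => by
    rw [Finsupp.notMem_support_iff.mp hj, zero_smul]

lemma delta_sum {M : Type*} [AddCommGroup M] [Module ℝ M] (j : J) (v : J → M) :
    ∑ k ∈ (delta j).1.support, (delta j).1 k • v k = v j := by
  show ∑ k ∈ (Finsupp.single j (1:ℝ)).support, Finsupp.single j (1:ℝ) k • v k = v j
  rw [Finsupp.support_single_ne_zero j one_ne_zero, Finset.sum_singleton,
    Finsupp.single_eq_same, one_smul]

lemma abs_sum_le_union (t u : J →₀ ℝ) {s : Finset J} (ht : t.support ⊆ s) :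
    ∑ j ∈ s, |t j| = ∑ j ∈ t.support, |t j| :=
  (Finset.sum_subset ht fun j _ hj => by
    rw [Finsupp.notMem_support_iff.mp hj, abs_zero]).symm

lemma convex_range_sum {M : Type*} [AddCommGroup M] [Module ℝ M] (v : J → M) :
    Convex ℝ (Set.range fun α : IndexIJ J => ∑ j ∈ α.1.support, α.1 j • v j) := by
  classical
  rintro x ⟨α, rfl⟩ y ⟨β, rfl⟩ a b ha hb hab
  set w : J →₀ ℝ := a • α.1 + b • β.1 with hw
  have hsupp : w.support ⊆ α.1.support ∪ β.1.support :=
    Finsupp.support_add.trans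
      (Finset.union_subset_union Finsupp.support_smul Finsupp.support_smul)
  have happ : ∀ j, w j = a * α.1 j + b * β.1 j := fun j => by
    simp [hw, smul_eq_mul]
  have habs : ∀ j, |w j| ≤ a * |α.1 j| + b * |β.1 j| := fun j => by
    rw [happ]
    exact (abs_add_le _ _).trans (by
      rw [abs_mul, abs_mul, abs_of_nonneg ha, abs_of_nonneg hb])
  refine ⟨⟨w, ?_, ?_⟩, ?_⟩
  · intro j
    calc |w j| ≤ a * |α.1 j| + b * |β.1 j| := habs j
      _ ≤ a * 1 + b * 1 :=
        add_le_add (mul_le_mul_of_nonneg_left (α.2.1 j) ha)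
          (mul_le_mul_of_nonneg_left (β.2.1 j) hb)
      _ = 1 := by rw [mul_one, mul_one, hab]
  · calc ∑ j ∈ w.support, |w j|
        = ∑ j ∈ α.1.support ∪ β.1.support, |w j| :=
          (abs_sum_le_union w w hsupp).symm
      _ ≤ ∑ j ∈ α.1.support ∪ β.1.support, (a * |α.1 j| + b * |β.1 j|) :=
          Finset.sum_le_sum fun j _ => habs j
      _ = a * ∑ j ∈ α.1.support ∪ β.1.support, |α.1 j|
          + b * ∑ j ∈ α.1.support ∪ β.1.support, |β.1 j| := by
          rw [Finset.sum_add_distrib, Finset.mul_sum, Finset.mul_sum]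
      _ = a * ∑ j ∈ α.1.support, |α.1 j| + b * ∑ j ∈ β.1.support, |β.1 j| := by
          rw [abs_sum_le_union α.1 α.1 Finset.subset_union_left,
            abs_sum_le_union β.1 β.1 Finset.subset_union_right]
      _ ≤ a * 1 + b * 1 :=
          add_le_add (mul_le_mul_of_nonneg_left α.2.2 ha)
            (mul_le_mul_of_nonneg_left β.2.2 hb)
      _ = 1 := by rw [mul_one, mul_one, hab]
  · show ∑ j ∈ w.support, w j • v j
        = a • ∑ j ∈ α.1.support, α.1 j • v j + b • ∑ j ∈ β.1.support, β.1 j • v j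
    rw [sum_eq_of_subset w hsupp v,
      sum_eq_of_subset α.1 (Finset.subset_union_left) v,
      sum_eq_of_subset β.1 (Finset.subset_union_right) v,
      Finset.smul_sum, Finset.smul_sum, ← Finset.sum_add_distrib]
    refine Finset.sum_congr rfl fun j _ => ?_
    rw [happ, add_smul, mul_smul, mul_smul]

lemma balanced_range_sum {M : Type*} [AddCommGroup M] [Module ℝ M] (v : J → M) :
    Balanced ℝ (Set.range fun α : IndexIJ J => ∑ j ∈ α.1.support, α.1 j • v j) := by
  classical
  rintro a ha x ⟨y, ⟨α, rfl⟩, rfl⟩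
  have ha' : |a| ≤ 1 := by rwa [Real.norm_eq_abs] at ha
  set w : J →₀ ℝ := a • α.1 with hw
  have hsupp : w.support ⊆ α.1.support := Finsupp.support_smul
  have happ : ∀ j, w j = a * α.1 j := fun j => by simp [hw, smul_eq_mul]
  refine ⟨⟨w, ?_, ?_⟩, ?_⟩
  · intro j
    rw [happ, abs_mul]
    exact mul_le_one₀ ha' (abs_nonneg _) (α.2.1 j)
  · calc ∑ j ∈ w.support, |w j| = ∑ j ∈ α.1.support, |w j| :=
        (abs_sum_le_union w w hsupp).symm
      _ = |a| * ∑ j ∈ α.1.support, |α.1 j| := by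
          rw [Finset.mul_sum]
          exact Finset.sum_congr rfl fun j _ => by rw [happ, abs_mul]
      _ ≤ 1 * 1 := mul_le_mul ha' α.2.2 (Finset.sum_nonneg fun j _ => abs_nonneg _)
          zero_le_one
      _ = 1 := one_mul 1
  · show ∑ j ∈ w.support, w j • v j = a • ∑ j ∈ α.1.support, α.1 j • v j
    rw [sum_eq_of_subset w hsupp v, Finset.smul_sum]
    refine Finset.sum_congr rfl fun j _ => ?_
    rw [happ, mul_smul]

end Stmt0Aux

section MQVBAux

variable {F : ℝ≥0 → ℝ≥0 → ℝ≥0 → ℝ≥0 → ℝ≥0} {H : ℝ≥0 → ℝ≥0 → ℝ≥0} {J : Type}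

lemma ip_add_left (Am : MQVB F H) (ω η ζ : Am.carrier) :
    Am.ip (ω + η) ζ = Am.ip ω ζ + Am.ip η ζ := Am.hilbert.1 ω η ζ

lemma ip_zero_left (Am : MQVB F H) (ζ : Am.carrier) : Am.ip 0 ζ = 0 := by
  have h := Am.hilbert.1 0 0 ζ
  rw [add_zero] at h
  exact right_eq_add.mp h

lemma ip_csmul_left (Am : MQVB F H) (c : ℂ) (ω ζ : Am.carrier) :
    Am.ip (c • ω) ζ = c • Am.ip ω ζ := by
  have h1 : c • ω = (c • (1 : Am.base.carrier)) • ω := by rw [smul_assoc, one_smul]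
  rw [h1, Am.hilbert.2.1, smul_mul_assoc, one_mul]

lemma ip_smul_left (Am : MQVB F H) (r : ℝ) (ω ζ : Am.carrier) :
    Am.ip (r • ω) ζ = r • Am.ip ω ζ := by
  rw [← Complex.coe_smul, ip_csmul_left, Complex.coe_smul]

lemma ip_star (Am : MQVB F H) (ω η : Am.carrier) :
    Am.ip ω η = star (Am.ip η ω) := Am.hilbert.2.2.1 ω η

lemma ip_sum_left (Am : MQVB F H) (s : Finset J) (t : J → ℝ) (v : J → Am.carrier)
    (ζ : Am.carrier) :
    Am.ip (∑ j ∈ s, t j • v j) ζ = ∑ j ∈ s, t j • Am.ip (v j) ζ := by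
  classical
  induction s using Finset.cons_induction with
  | empty => simpa using ip_zero_left Am ζ
  | cons j s hj ih =>
    rw [Finset.sum_cons, Finset.sum_cons, ip_add_left, ip_smul_left, ih]

lemma ip_sum_right (Am : MQVB F H) (s : Finset J) (t : J → ℝ) (v : J → Am.carrier)
    (ζ : Am.carrier) :
    Am.ip ζ (∑ j ∈ s, t j • v j) = ∑ j ∈ s, t j • Am.ip ζ (v j) := by
  rw [ip_star, ip_sum_left, star_sum]
  refine Finset.sum_congr rfl fun j _ => ?_
  rw [← Complex.coe_smul, star_smul, Complex.star_def, Complex.conj_ofReal,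
    Complex.coe_smul, ← ip_star]

lemma dn_zero (Am : MQVB F H) : Am.Dn 0 = 0 := by
  have h := Am.dnorm.2.1 0 0
  simpa using h

lemma dn_sum_le (Am : MQVB F H) (s : Finset J) (v : J → Am.carrier) :
    Am.Dn (∑ j ∈ s, v j) ≤ ∑ j ∈ s, Am.Dn (v j) := by
  classical
  induction s using Finset.cons_induction with
  | empty => simp [dn_zero]
  | cons j s hj ih =>
    rw [Finset.sum_cons, Finset.sum_cons]
    exact (Am.dnorm.1 _ _).trans (add_le_add_right ih _)

lemma dn_coh_le_one (Am : MQVB F H) (α : IndexIJ J) (v : J → Am.carrier)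
    (hv : ∀ j, Am.Dn (v j) ≤ 1) :
    Am.Dn (∑ j ∈ α.1.support, α.1 j • v j) ≤ 1 := by
  refine (dn_sum_le Am _ _).trans ?_
  have step : ∀ j ∈ α.1.support, Am.Dn (α.1 j • v j) ≤ (‖α.1 j‖₊ : ℝ≥0∞) := by
    intro j _
    rw [← Complex.coe_smul, Am.dnorm.2.1, Complex.nnnorm_real]
    calc (‖α.1 j‖₊ : ℝ≥0∞) * Am.Dn (v j) ≤ (‖α.1 j‖₊ : ℝ≥0∞) * 1 :=
        mul_le_mul_right (hv j) _
      _ = (‖α.1 j‖₊ : ℝ≥0∞) := mul_one _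
  calc ∑ j ∈ α.1.support, Am.Dn (α.1 j • v j)
      ≤ ∑ j ∈ α.1.support, (‖α.1 j‖₊ : ℝ≥0∞) := Finset.sum_le_sum step
    _ = ((∑ j ∈ α.1.support, ‖α.1 j‖₊ : ℝ≥0) : ℝ≥0∞) :=
        (ENNReal.coe_finset_sum _ _).symm
    _ ≤ 1 := by exact_mod_cast Stmt0Aux.sum_nnnorm_le α

lemma mkD_self (Am : MQVB F H) (ω : Am.carrier) : Am.mkD ω ω = 0 := by
  refine le_antisymm (iSup₂_le fun ζ _ => ?_) zero_le
  simp [sub_self, ip_zero_left]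

lemma sum_mul_le (α : IndexIJ J) (c : J → ℝ≥0∞) (C : ℝ≥0∞)
    (hc : ∀ j ∈ α.1.support, c j ≤ C) :
    ∑ j ∈ α.1.support, (‖α.1 j‖₊ : ℝ≥0∞) * c j ≤ C := by
  calc ∑ j ∈ α.1.support, (‖α.1 j‖₊ : ℝ≥0∞) * c j
      ≤ ∑ j ∈ α.1.support, (‖α.1 j‖₊ : ℝ≥0∞) * C :=
        Finset.sum_le_sum fun j hj => mul_le_mul_right (hc j hj) _
    _ = ((∑ j ∈ α.1.support, ‖α.1 j‖₊ : ℝ≥0) : ℝ≥0∞) * C := by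
        rw [← Finset.sum_mul, ENNReal.coe_finset_sum]
    _ ≤ 1 * C := by
        refine mul_le_mul_left ?_ C
        exact_mod_cast Stmt0Aux.sum_nnnorm_le α
    _ = C := one_mul C

lemma bn_sum_le {A B : QCMS F} (γb : Bridge A B) (s : Finset J) (t : J → ℝ)
    (a : J → A.carrier) (b : J → B.carrier) :
    γb.bn (∑ j ∈ s, t j • a j) (∑ j ∈ s, t j • b j) ≤
      ∑ j ∈ s, (‖t j‖₊ : ℝ≥0∞) * γb.bn (a j) (b j) := by
  simp only [← Complex.coe_smul]
  have h : γb.πA (∑ j ∈ s, ((t j : ℂ)) • a j) * γb.x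
      - γb.x * γb.πB (∑ j ∈ s, ((t j : ℂ)) • b j)
      = ∑ j ∈ s, ((t j : ℂ)) • (γb.πA (a j) * γb.x - γb.x * γb.πB (b j)) := by
    rw [map_sum, map_sum, Finset.sum_mul, Finset.mul_sum, ← Finset.sum_sub_distrib]
    refine Finset.sum_congr rfl fun j _ => ?_
    rw [map_smul, map_smul, smul_mul_assoc, mul_smul_comm, smul_sub]
  show (‖_‖₊ : ℝ≥0∞) ≤ _
  rw [h]
  calc (‖∑ j ∈ s, ((t j : ℂ)) • (γb.πA (a j) * γb.x - γb.x * γb.πB (b j))‖₊ : ℝ≥0∞)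
      ≤ ((∑ j ∈ s, ‖((t j : ℂ)) • (γb.πA (a j) * γb.x - γb.x * γb.πB (b j))‖₊ : ℝ≥0) : ℝ≥0∞) := by
        exact_mod_cast nnnorm_sum_le s _
    _ = ∑ j ∈ s, (‖t j‖₊ : ℝ≥0∞) * γb.bn (a j) (b j) := by
        rw [ENNReal.coe_finset_sum]
        refine Finset.sum_congr rfl fun j _ => ?_
        rw [nnnorm_smul, Complex.nnnorm_real, ENNReal.coe_mul]
        rfl

end MQVBAux

section DeckAux

variable {F : ℝ≥0 → ℝ≥0 → ℝ≥0 → ℝ≥0 → ℝ≥0} {H : ℝ≥0 → ℝ≥0 → ℝ≥0}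
variable {Am Bm : MQVB F H}

lemma deck_coh (γ : ModularBridge Am Bm) (ω : Am.carrier) (η : Bm.carrier) :
    (⨆ α : IndexIJ γ.J,
      max (γ.toBridge.bn (Am.ip ω (cohAnchor γ α)) (Bm.ip η (cohCoanchor γ α)))
          (γ.toBridge.bn (Am.ip (cohAnchor γ α) ω) (Bm.ip (cohCoanchor γ α) η)))
      = γ.deck ω η := by
  apply le_antisymm
  · refine iSup_le fun α => max_le ?_ ?_
    · show γ.toBridge.bn (Am.ip ω (∑ j ∈ α.1.support, α.1 j • γ.anchor j))
        (Bm.ip η (∑ j ∈ α.1.support, α.1 j • γ.coanchor j)) ≤ _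
      rw [ip_sum_right, ip_sum_right]
      refine (bn_sum_le γ.toBridge _ _ _ _).trans (sum_mul_le α _ _ fun j _ => ?_)
      exact le_trans (le_max_left _ _) (le_iSup (fun j => max
        (γ.toBridge.bn (Am.ip ω (γ.anchor j)) (Bm.ip η (γ.coanchor j)))
        (γ.toBridge.bn (Am.ip (γ.anchor j) ω) (Bm.ip (γ.coanchor j) η))) j)
    · show γ.toBridge.bn (Am.ip (∑ j ∈ α.1.support, α.1 j • γ.anchor j) ω)
        (Bm.ip (∑ j ∈ α.1.support, α.1 j • γ.coanchor j) η) ≤ _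
      rw [ip_sum_left, ip_sum_left]
      refine (bn_sum_le γ.toBridge _ _ _ _).trans (sum_mul_le α _ _ fun j _ => ?_)
      exact le_trans (le_max_right _ _) (le_iSup (fun j => max
        (γ.toBridge.bn (Am.ip ω (γ.anchor j)) (Bm.ip η (γ.coanchor j)))
        (γ.toBridge.bn (Am.ip (γ.anchor j) ω) (Bm.ip (γ.coanchor j) η))) j)
  · refine iSup_le fun j => ?_
    have h1 : cohAnchor γ (Stmt0Aux.delta j) = γ.anchor j := Stmt0Aux.delta_sum j γ.anchor
    have h2 : cohCoanchor γ (Stmt0Aux.delta j) = γ.coanchor j := Stmt0Aux.delta_sum j γ.coanchor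
    have := le_iSup (fun α : IndexIJ γ.J => max
      (γ.toBridge.bn (Am.ip ω (cohAnchor γ α)) (Bm.ip η (cohCoanchor γ α)))
      (γ.toBridge.bn (Am.ip (cohAnchor γ α) ω) (Bm.ip (cohCoanchor γ α) η)))
      (Stmt0Aux.delta j)
    rwa [h1, h2] at this

lemma deck_coh_le_reach (γ : ModularBridge Am Bm) (α : IndexIJ γ.J) :
    γ.deck (cohAnchor γ α) (cohCoanchor γ α) ≤ γ.modularReach := by
  refine iSup_le fun j => max_le ?_ ?_
  · show γ.toBridge.bn (Am.ip (∑ k ∈ α.1.support, α.1 k • γ.anchor k) (γ.anchor j))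
      (Bm.ip (∑ k ∈ α.1.support, α.1 k • γ.coanchor k) (γ.coanchor j)) ≤ _
    rw [ip_sum_left, ip_sum_left]
    refine (bn_sum_le γ.toBridge _ _ _ _).trans (sum_mul_le α _ _ fun k _ => ?_)
    calc γ.toBridge.bn (Am.ip (γ.anchor k) (γ.anchor j)) (Bm.ip (γ.coanchor k) (γ.coanchor j))
        ≤ γ.deck (γ.anchor k) (γ.coanchor k) :=
          le_trans (le_max_left _ _) (le_iSup (fun j' => max
            (γ.toBridge.bn (Am.ip (γ.anchor k) (γ.anchor j')) (Bm.ip (γ.coanchor k) (γ.coanchor j')))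
            (γ.toBridge.bn (Am.ip (γ.anchor j') (γ.anchor k)) (Bm.ip (γ.coanchor j') (γ.coanchor k)))) j)
      _ ≤ γ.modularReach := le_iSup (fun k => γ.deck (γ.anchor k) (γ.coanchor k)) k
  · show γ.toBridge.bn (Am.ip (γ.anchor j) (∑ k ∈ α.1.support, α.1 k • γ.anchor k))
      (Bm.ip (γ.coanchor j) (∑ k ∈ α.1.support, α.1 k • γ.coanchor k)) ≤ _
    rw [ip_sum_right, ip_sum_right]
    refine (bn_sum_le γ.toBridge _ _ _ _).trans (sum_mul_le α _ _ fun k _ => ?_)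
    calc γ.toBridge.bn (Am.ip (γ.anchor j) (γ.anchor k)) (Bm.ip (γ.coanchor j) (γ.coanchor k))
        ≤ γ.deck (γ.anchor k) (γ.coanchor k) :=
          le_trans (le_max_right _ _) (le_iSup (fun j' => max
            (γ.toBridge.bn (Am.ip (γ.anchor k) (γ.anchor j')) (Bm.ip (γ.coanchor k) (γ.coanchor j')))
            (γ.toBridge.bn (Am.ip (γ.anchor j') (γ.anchor k)) (Bm.ip (γ.coanchor j') (γ.coanchor k)))) j)
      _ ≤ γ.modularReach := le_iSup (fun k => γ.deck (γ.anchor k) (γ.coanchor k)) k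

lemma ennH_le {X : Type*} (d : X → X → ℝ≥0∞) (hd : ∀ x, d x x = 0) (S S' T : Set X)
    (hS : S ⊆ S') (hS'T : S' ⊆ T) :
    ennHausdorff d S' T ≤ ennHausdorff d S T := by
  refine max_le ?_ (le_max_of_le_right ?_)
  · refine le_trans (α := ℝ≥0∞) ?_ zero_le
    refine iSup₂_le fun x hx => ?_
    exact le_trans (iInf₂_le x (hS'T hx)) (le_of_eq (hd x))
  · refine iSup₂_mono fun y hy => ?_
    exact le_iInf₂ fun x hx => iInf₂_le x (hS hx)

end DeckAux
theorem stmt0 {F : ℝ≥0 → ℝ≥0 → ℝ≥0 → ℝ≥0 → ℝ≥0} {H : ℝ≥0 → ℝ≥0 → ℝ≥0}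
    (hFH : PermissiblePair F H) (Am Bm : MQVB F H) (γ : ModularBridge Am Bm) :
    ∃ (hω : ∀ α : IndexIJ γ.J, Am.Dn (cohAnchor γ α) ≤ 1)
      (hη : ∀ α : IndexIJ γ.J, Bm.Dn (cohCoanchor γ α) ≤ 1),
      let γ' : ModularBridge Am Bm :=
        { J := IndexIJ γ.J
          toBridge := γ.toBridge
          x_norm := γ.x_norm
          anchor := cohAnchor γ
          coanchor := cohCoanchor γ
          anchor_le := hω
          coanchor_le := hη }
      γ'.toBridge = γ.toBridge ∧
      γ'.length ≤ γ.length ∧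
      (∀ (ω : Am.carrier) (η : Bm.carrier), γ'.deck ω η = γ.deck ω η) ∧
      Convex ℝ (Set.range γ'.anchor) ∧ Balanced ℝ (Set.range γ'.anchor) ∧
      Convex ℝ (Set.range γ'.coanchor) ∧ Balanced ℝ (Set.range γ'.coanchor) := by
  have hω : ∀ α : IndexIJ γ.J, Am.Dn (cohAnchor γ α) ≤ 1 :=
    fun α => dn_coh_le_one Am α γ.anchor γ.anchor_le
  have hη : ∀ α : IndexIJ γ.J, Bm.Dn (cohCoanchor γ α) ≤ 1 :=
    fun α => dn_coh_le_one Bm α γ.coanchor γ.coanchor_le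
  refine ⟨hω, hη, ?_⟩
  intro γ'
  have hdeck : ∀ (ω : Am.carrier) (η : Bm.carrier), γ'.deck ω η = γ.deck ω η :=
    fun ω η => deck_coh γ ω η
  refine ⟨rfl, ?_, hdeck, ?_, ?_, ?_, ?_⟩
  · have hreach : γ'.modularReach ≤ γ.modularReach := by
      refine iSup_le fun α => ?_
      calc γ'.deck (γ'.anchor α) (γ'.coanchor α)
          = γ.deck (cohAnchor γ α) (cohCoanchor γ α) := hdeck _ _
        _ ≤ γ.modularReach := deck_coh_le_reach γ α
    have himp : γ'.imprint ≤ γ.imprint := by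
      refine max_le_max ?_ ?_
      · exact ennH_le Am.mkD (mkD_self Am) (Set.range γ.anchor) (Set.range γ'.anchor)
          {ω : Am.carrier | Am.Dn ω ≤ 1}
          (by rintro x ⟨j, rfl⟩
              exact ⟨Stmt0Aux.delta j, Stmt0Aux.delta_sum j γ.anchor⟩)
          (by rintro x ⟨α, rfl⟩; exact hω α)
      · exact ennH_le Bm.mkD (mkD_self Bm) (Set.range γ.coanchor) (Set.range γ'.coanchor)
          {η : Bm.carrier | Bm.Dn η ≤ 1}
          (by rintro x ⟨j, rfl⟩
              exact ⟨Stmt0Aux.delta j, Stmt0Aux.delta_sum j γ.coanchor⟩)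
          (by rintro x ⟨α, rfl⟩; exact hη α)
    calc γ'.length = max γ.toBridge.length (γ'.imprint + γ'.modularReach) := rfl
      _ ≤ max γ.toBridge.length (γ.imprint + γ.modularReach) :=
          max_le_max le_rfl (add_le_add himp hreach)
      _ = γ.length := rfl
  · exact Stmt0Aux.convex_range_sum γ.anchor
  · exact Stmt0Aux.balanced_range_sum γ.anchor
  · exact Stmt0Aux.convex_range_sum γ.coanchor
  · exact Stmt0Aux.balanced_range_sum γ.coanchor
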